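/- (Theorem 2) Let λ ∈ (0,1), let Ω(k) be a sequence of real symmetric positive semidefinite n×n matrices, and suppose there exist k_e ∈ ℕ and α_Ω > 0, β_Ω > 0 with α_Ω·I ≼ Ω(k) ≼ β_Ω·I for all k ≥ k_e. Let R(k) be a sequence of real symmetric matrices with R(0) positive semidefinite satisfying R(k+1) = λ·R(k) + Ω(k)² for all k ≥ 0. Then there exist α > 0 and β > 0 (for instance α = α_Ω² and β = β_Ω²) such that α·I ≼ R(k) ≼ R(0) + (1/(1−λ))·β·I for all k ≥ k_e + 1; in particular R(k) is positive definite and uniformly bounded for all such k. -/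

import Mathlib

open Matrix Finset

private lemma psd_quad {n : ℕ} {A : Matrix (Fin n) (Fin n) ℝ} (h : A.PosSemidef)
    (x : Fin n → ℝ) : 0 ≤ x ⬝ᵥ (A *ᵥ x) := by simpa using h.dotProduct_mulVec_nonneg x

private lemma psd_mk {n : ℕ} {A : Matrix (Fin n) (Fin n) ℝ} (h1 : A.IsHermitian)
    (h2 : ∀ x : Fin n → ℝ, 0 ≤ x ⬝ᵥ (A *ᵥ x)) : A.PosSemidef :=
  Matrix.PosSemidef.of_dotProduct_mulVec_nonneg h1 fun x => by simpa using h2 x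

private lemma herm_transpose {n : ℕ} {A : Matrix (Fin n) (Fin n) ℝ}
    (h : A.IsHermitian) : Aᵀ = A := by
  ext i j
  simpa [Matrix.conjTranspose_apply] using congrFun (congrFun h i) j

private lemma quad_sq {n : ℕ} {A : Matrix (Fin n) (Fin n) ℝ} (hA : A.IsHermitian)
    (x : Fin n → ℝ) : x ⬝ᵥ ((A * A) *ᵥ x) = (A *ᵥ x) ⬝ᵥ (A *ᵥ x) := by
  rw [← Matrix.mulVec_mulVec, Matrix.dotProduct_mulVec, ← herm_transpose hA,
    Matrix.vecMul_transpose, herm_transpose hA]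

private lemma herm_sq {n : ℕ} {A : Matrix (Fin n) (Fin n) ℝ} (hA : A.IsHermitian) :
    (A * A).IsHermitian := by
  rw [Matrix.IsHermitian, Matrix.conjTranspose_mul, hA.eq]

private lemma herm_smul_one {n : ℕ} (c : ℝ) :
    (c • (1 : Matrix (Fin n) (Fin n) ℝ)).IsHermitian := by
  ext i j
  simp [Matrix.conjTranspose_apply, Matrix.one_apply, eq_comm]

private lemma sq_upper {n : ℕ} {A : Matrix (Fin n) (Fin n) ℝ} (hA : A.IsHermitian) {c : ℝ}
    (hc : ∑ i, ∑ j, (A i j) ^ 2 ≤ c) :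
    Matrix.PosSemidef (c • (1 : Matrix (Fin n) (Fin n) ℝ) - A * A) := by
  apply psd_mk ((herm_smul_one c).sub (herm_sq hA))
  intro x
  have h1 : x ⬝ᵥ ((c • (1 : Matrix (Fin n) (Fin n) ℝ) - A * A) *ᵥ x)
      = c * (x ⬝ᵥ x) - (A *ᵥ x) ⬝ᵥ (A *ᵥ x) := by
    rw [Matrix.sub_mulVec, dotProduct_sub, quad_sq hA]
    simp [Matrix.smul_mulVec]
  rw [h1, sub_nonneg]
  have hxx : x ⬝ᵥ x = ∑ j, (x j) ^ 2 := by simp [dotProduct, sq]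
  have h2 : (A *ᵥ x) ⬝ᵥ (A *ᵥ x) = ∑ i, (∑ j, A i j * x j) ^ 2 := by
    simp [dotProduct, Matrix.mulVec, sq]
  rw [h2, hxx]
  calc ∑ i, (∑ j, A i j * x j) ^ 2
      ≤ ∑ i, (∑ j, (A i j) ^ 2) * ∑ j, (x j) ^ 2 := by
        refine Finset.sum_le_sum fun i _ => ?_
        exact Finset.sum_mul_sq_le_sq_mul_sq _ _ _
    _ = (∑ i, ∑ j, (A i j) ^ 2) * ∑ j, (x j) ^ 2 := by rw [Finset.sum_mul]
    _ ≤ c * ∑ j, (x j) ^ 2 := by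
        apply mul_le_mul_of_nonneg_right hc
        exact Finset.sum_nonneg fun j _ => sq_nonneg _

private lemma sq_lower {n : ℕ} {A : Matrix (Fin n) (Fin n) ℝ} (hA : A.PosSemidef) {a : ℝ}
    (ha : 0 ≤ a) (h : Matrix.PosSemidef (A - a • (1 : Matrix (Fin n) (Fin n) ℝ))) :
    Matrix.PosSemidef (A * A - (a ^ 2) • (1 : Matrix (Fin n) (Fin n) ℝ)) := by
  apply psd_mk ((herm_sq hA.1).sub (herm_smul_one _))
  intro x
  have h1 : x ⬝ᵥ ((A * A - (a ^ 2) • (1 : Matrix (Fin n) (Fin n) ℝ)) *ᵥ x)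
      = (A *ᵥ x) ⬝ᵥ (A *ᵥ x) - a ^ 2 * (x ⬝ᵥ x) := by
    rw [Matrix.sub_mulVec, dotProduct_sub, quad_sq hA.1]
    simp [Matrix.smul_mulVec]
  rw [h1, sub_nonneg]
  -- from h : a * (x ⬝ᵥ x) ≤ x ⬝ᵥ (A *ᵥ x)
  have hq : a * (x ⬝ᵥ x) ≤ x ⬝ᵥ (A *ᵥ x) := by
    have := psd_quad h x
    rw [Matrix.sub_mulVec, dotProduct_sub, sub_nonneg] at this
    simpa [Matrix.smul_mulVec] using this
  have hxx : 0 ≤ x ⬝ᵥ x := Finset.sum_nonneg fun i _ => mul_self_nonneg (x i)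
  rcases eq_or_lt_of_le hxx with hx0 | hx0
  · -- x ⬝ᵥ x = 0
    have : a ^ 2 * (x ⬝ᵥ x) = 0 := by rw [← hx0]; ring
    rw [this]
    exact Finset.sum_nonneg fun i _ => mul_self_nonneg ((A *ᵥ x) i)
  · -- Cauchy-Schwarz: (x ⬝ᵥ (A *ᵥ x))^2 ≤ (x ⬝ᵥ x) * ((A *ᵥ x) ⬝ᵥ (A *ᵥ x))
    have hcs : (x ⬝ᵥ (A *ᵥ x)) ^ 2 ≤ (x ⬝ᵥ x) * ((A *ᵥ x) ⬝ᵥ (A *ᵥ x)) := by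
      have := Finset.sum_mul_sq_le_sq_mul_sq Finset.univ x (A *ᵥ x)
      simpa [dotProduct, sq] using this
    have h2 : (a * (x ⬝ᵥ x)) ^ 2 ≤ (x ⬝ᵥ (A *ᵥ x)) ^ 2 := by
      apply pow_le_pow_left₀ (mul_nonneg ha hxx) hq
    nlinarith [sq_nonneg (x ⬝ᵥ x)]

private lemma quad_expand {n : ℕ} (A : Matrix (Fin n) (Fin n) ℝ) (x : Fin n → ℝ) :
    x ⬝ᵥ (A *ᵥ x) = ∑ p, ∑ q, x p * A p q * x q := by
  simp [dotProduct, Matrix.mulVec, Finset.mul_sum, mul_assoc]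


private lemma quad_pair_add {n : ℕ} {A : Matrix (Fin n) (Fin n) ℝ} (hA : A.PosSemidef)
    {i j : Fin n} (hij : i ≠ j) : 0 ≤ A i i + A i j + (A j i + A j j) := by
  have e1 := psd_quad hA (Pi.single i 1 + Pi.single j 1)
  rw [quad_expand] at e1
  simp [Pi.single_apply, add_mul, mul_add, Finset.sum_add_distrib, ite_mul, mul_ite,
    Finset.sum_ite_eq, Finset.sum_ite_eq', hij, hij.symm] at e1
  convert e1 using 1
  ring

private lemma quad_pair_sub {n : ℕ} {A : Matrix (Fin n) (Fin n) ℝ} (hA : A.PosSemidef)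
    {i j : Fin n} (hij : i ≠ j) : 0 ≤ A i i - A i j + (A j j - A j i) := by
  have e1 := psd_quad hA (Pi.single i 1 - Pi.single j 1)
  rw [quad_expand] at e1
  simp [Pi.single_apply, sub_mul, mul_sub, Finset.sum_sub_distrib, ite_mul, mul_ite,
    Finset.sum_ite_eq, Finset.sum_ite_eq', hij, hij.symm] at e1
  linarith

private lemma quad_diag {n : ℕ} {A : Matrix (Fin n) (Fin n) ℝ} (hA : A.PosSemidef)
    (i : Fin n) : 0 ≤ A i i := by
  have e1 := psd_quad hA (Pi.single i 1)
  rw [quad_expand] at e1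
  simpa [Pi.single_apply, ite_mul, mul_ite, Finset.sum_ite_eq, Finset.sum_ite_eq'] using e1

private lemma entry_sq_le {n : ℕ} {A : Matrix (Fin n) (Fin n) ℝ} (hA : A.PosSemidef) {b : ℝ}
    (h : Matrix.PosSemidef (b • (1 : Matrix (Fin n) (Fin n) ℝ) - A)) (i j : Fin n) :
    (A i j) ^ 2 ≤ b ^ 2 := by
  have hdiag : ∀ p : Fin n, A p p ≤ b := by
    intro p
    have := quad_diag h p
    simp [Matrix.sub_apply, Matrix.smul_apply, Matrix.one_apply] at this
    linarith
  have hdiag0 : ∀ p : Fin n, 0 ≤ A p p := quad_diag hA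
  have hb : 0 ≤ b := le_trans (hdiag0 i) (hdiag i)
  by_cases hij : i = j
  · subst hij
    exact sq_le_sq' (by linarith [hdiag0 i, hdiag i]) (hdiag i)
  · have h1 := quad_pair_add hA hij
    have h2 := quad_pair_sub hA hij
    have hsym : A j i = A i j := by
      have := congrFun (congrFun hA.1 i) j
      simpa [Matrix.conjTranspose_apply] using this
    apply sq_le_sq'
    · linarith [hdiag i, hdiag j]
    · linarith [hdiag i, hdiag j]

private lemma psd_smul {n : ℕ} {A : Matrix (Fin n) (Fin n) ℝ} (hA : A.PosSemidef) {c : ℝ}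
    (hc : 0 ≤ c) : (c • A).PosSemidef := by
  apply psd_mk
  · ext i j
    have := congrFun (congrFun hA.1 i) j
    simp [Matrix.conjTranspose_apply] at this ⊢
    exact Or.inl (by simpa using this)
  · intro x
    rw [Matrix.smul_mulVec, dotProduct_smul, smul_eq_mul]
    exact mul_nonneg hc (psd_quad hA x)

/-- (Theorem 2) Boundedness of the information matrix: if `α_Ω I ≼ Ω(k) ≼ β_Ω I` for
`k ≥ k_e` and `R(k+1) = λ R(k) + Ω(k)²` with `R(0)` positive semidefinite, then there
exist `α > 0` and `β > 0` (e.g. `α = α_Ω²`, `β = β_Ω²`) with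
`α I ≼ R(k) ≼ R(0) + (1/(1−λ)) β I` for all `k ≥ k_e + 1`; in particular `R(k)` is
positive definite and uniformly bounded for all such `k`. -/
theorem information_matrix_bounds {n : ℕ}
    (lam : ℝ) (hlam0 : 0 < lam) (hlam1 : lam < 1)
    (Ω : ℕ → Matrix (Fin n) (Fin n) ℝ) (hΩ : ∀ k, (Ω k).PosSemidef)
    (k_e : ℕ) (αΩ βΩ : ℝ) (hαΩ : 0 < αΩ) (hβΩ : 0 < βΩ)
    (hlow : ∀ k ≥ k_e, Matrix.PosSemidef (Ω k - αΩ • (1 : Matrix (Fin n) (Fin n) ℝ)))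
    (hup : ∀ k ≥ k_e, Matrix.PosSemidef (βΩ • (1 : Matrix (Fin n) (Fin n) ℝ) - Ω k))
    (R : ℕ → Matrix (Fin n) (Fin n) ℝ) (hRsym : ∀ k, (R k).IsHermitian)
    (hR0 : (R 0).PosSemidef)
    (hrec : ∀ k : ℕ, R (k + 1) = lam • R k + Ω k * Ω k) :
    ∃ α β : ℝ, 0 < α ∧ 0 < β ∧ ∀ k ≥ k_e + 1,
      Matrix.PosSemidef (R k - α • (1 : Matrix (Fin n) (Fin n) ℝ)) ∧
      Matrix.PosSemidef
        ((R 0 + (1 / (1 - lam)) • β • (1 : Matrix (Fin n) (Fin n) ℝ)) - R k) ∧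
      (R k).PosDef := by
  have h1l : (0:ℝ) < 1 - lam := by linarith
  -- Frobenius norms
  set F : ℕ → ℝ := fun k => ∑ i, ∑ j, (Ω k i j) ^ 2 with hF
  have hF0 : ∀ k, 0 ≤ F k := fun k =>
    Finset.sum_nonneg fun i _ => Finset.sum_nonneg fun j _ => sq_nonneg _
  set B : ℝ := (n : ℝ) ^ 2 * βΩ ^ 2 + 1 + ∑ k ∈ Finset.range k_e, F k with hB
  have hBpos : 0 < B := by
    have h1 : 0 ≤ (n : ℝ) ^ 2 * βΩ ^ 2 := mul_nonneg (sq_nonneg _) (sq_nonneg _)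
    have h2 : 0 ≤ ∑ k ∈ Finset.range k_e, F k := Finset.sum_nonneg fun k _ => hF0 k
    rw [hB]; linarith
  have hFB : ∀ k, F k ≤ B := by
    intro k
    have h2 : 0 ≤ ∑ k ∈ Finset.range k_e, F k := Finset.sum_nonneg fun k _ => hF0 k
    by_cases hk : k_e ≤ k
    · have hbound : F k ≤ (n : ℝ) ^ 2 * βΩ ^ 2 := by
        calc F k ≤ ∑ _i : Fin n, ∑ _j : Fin n, βΩ ^ 2 := by
              refine Finset.sum_le_sum fun i _ => Finset.sum_le_sum fun j _ => ?_
              exact entry_sq_le (hΩ k) (hup k hk) i j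
          _ = (n : ℝ) ^ 2 * βΩ ^ 2 := by simp [sq]; ring
      rw [hB]; linarith
    · push_neg at hk
      have : F k ≤ ∑ j ∈ Finset.range k_e, F j :=
        Finset.single_le_sum (fun j _ => hF0 j) (Finset.mem_range.mpr hk)
      have h1 : 0 ≤ (n : ℝ) ^ 2 * βΩ ^ 2 := mul_nonneg (sq_nonneg _) (sq_nonneg _)
      rw [hB]; linarith
  have hΩB : ∀ k, Matrix.PosSemidef (B • (1 : Matrix (Fin n) (Fin n) ℝ) - Ω k * Ω k) :=
    fun k => sq_upper (hΩ k).1 (hFB k)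
  -- R is PSD for all k
  have hRpsd : ∀ k, (R k).PosSemidef := by
    intro k
    induction k with
    | zero => exact hR0
    | succ m ih =>
      rw [hrec m]
      refine (psd_smul ih hlam0.le).add (psd_mk (herm_sq (hΩ m).1) fun x => ?_)
      rw [quad_sq (hΩ m).1]
      exact Finset.sum_nonneg fun i _ => mul_self_nonneg ((Ω m *ᵥ x) i)
  -- upper bound by induction
  set c : ℝ := B / (1 - lam) with hc
  have hc0 : 0 ≤ c := div_nonneg hBpos.le h1l.le
  have hceq : c = lam * c + B := by
    rw [hc]; field_simp; ring
  have hupper : ∀ k, Matrix.PosSemidef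
      (R 0 + c • (1 : Matrix (Fin n) (Fin n) ℝ) - R k) := by
    intro k
    induction k with
    | zero =>
      rw [add_sub_cancel_left]
      exact psd_smul Matrix.PosSemidef.one hc0
    | succ m ih =>
      have key : R 0 + c • (1 : Matrix (Fin n) (Fin n) ℝ) - R (m + 1)
          = lam • (R 0 + c • (1 : Matrix (Fin n) (Fin n) ℝ) - R m)
            + ((1 - lam) • R 0 + (B • (1 : Matrix (Fin n) (Fin n) ℝ) - Ω m * Ω m)) := by
        rw [hrec m]
        ext i j
        simp only [Matrix.add_apply, Matrix.sub_apply, Matrix.smul_apply, Matrix.one_apply,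
          smul_eq_mul]
        linear_combination (if i = j then (1:ℝ) else 0) * hceq
      rw [key]
      exact (psd_smul ih hlam0.le).add ((psd_smul hR0 h1l.le).add (hΩB m))
  refine ⟨αΩ ^ 2, B, pow_pos hαΩ 2, hBpos, ?_⟩
  intro k hk
  obtain ⟨m, rfl⟩ : ∃ m, k = m + 1 := ⟨k - 1, by omega⟩
  have hm : k_e ≤ m := by omega
  have hlower : Matrix.PosSemidef (R (m + 1) - αΩ ^ 2 • (1 : Matrix (Fin n) (Fin n) ℝ)) := by
    rw [hrec m, add_sub_assoc]
    exact (psd_smul (hRpsd m) hlam0.le).add (sq_lower (hΩ m) hαΩ.le (hlow m hm))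
  refine ⟨hlower, ?_, ?_⟩
  · have : (1 / (1 - lam)) • B • (1 : Matrix (Fin n) (Fin n) ℝ)
        = c • (1 : Matrix (Fin n) (Fin n) ℝ) := by
      rw [smul_smul, hc, one_div_mul_eq_div]
    rw [this]
    exact hupper (m + 1)
  · refine Matrix.PosDef.of_dotProduct_mulVec_pos (hRsym (m + 1)) fun x hx => ?_
    have hq := psd_quad hlower x
    rw [Matrix.sub_mulVec, dotProduct_sub, sub_nonneg] at hq
    have hxx : 0 < x ⬝ᵥ x := by
      obtain ⟨i, hi⟩ := Function.ne_iff.mp hx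
      exact Finset.sum_pos' (fun i _ => mul_self_nonneg (x i))
        ⟨i, Finset.mem_univ i, mul_self_pos.mpr hi⟩
    have h2 : αΩ ^ 2 * (x ⬝ᵥ x)
        ≤ x ⬝ᵥ (R (m + 1) *ᵥ x) := by
      simpa [Matrix.smul_mulVec] using hq
    have : (0:ℝ) < αΩ ^ 2 * (x ⬝ᵥ x) := mul_pos (pow_pos hαΩ 2) hxx
    have hfin : 0 < x ⬝ᵥ (R (m + 1) *ᵥ x) := lt_of_lt_of_le this h2
    simpa using hfin
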